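/- Let f₀ and f∞ be Laurent polynomials over ℚ in the variable A and set f⋆ := (A^{2} - A^{-2}) * f₀ + (A^{4} - A^{-4}) * f∞ (where A^{j} denotes the Laurent monomial T j). Then for every natural number n, v_n(f⋆) = Σ_{k=0}^{n-1} c_{n,k} * ( v_k(f₀) + 2^{n-k} * v_k(f∞) ), where c_{n,k} := 2^{n-k} * (1 + (-1)^{n-k+1}) / (n-k)!, and where for a Laurent polynomial f over ℚ we define v_n(f) := (1/n!) * Σ_{j ∈ ℤ} (f.coeff j) * j^n (a finite sum over the support of f). -/

import Mathlib

open LaurentPolynomial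

/-- For a Laurent polynomial `f` over `ℚ` in the variable `A`,
`v n f := (1/n!) * ∑ j, (coeff of A^j in f) * j^n` is the `n`-th Taylor
coefficient of `x ↦ f(e^x)` at `0`. -/
noncomputable def v (n : ℕ) (f : LaurentPolynomial ℚ) : ℚ :=
  (1 / (n.factorial : ℚ)) * ∑ j ∈ f.coeff.support, f.coeff j * (j : ℚ) ^ n

/-- The coefficients `c_{n,k} = 2^{n-k} (1 + (-1)^{n-k+1}) / (n-k)!` of
Theorem 13. -/
noncomputable def cCoeff (n k : ℕ) : ℚ :=
  2 ^ (n - k) * (1 + (-1 : ℚ) ^ (n - k + 1)) / ((n - k).factorial : ℚ)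

lemma v_eq_sum (n : ℕ) (f : LaurentPolynomial ℚ) :
    v n f = (1 / (n.factorial : ℚ)) * f.coeff.sum (fun j c => c * (j : ℚ) ^ n) := rfl

lemma v_add (n : ℕ) (f g : LaurentPolynomial ℚ) : v n (f + g) = v n f + v n g := by
  simp only [v_eq_sum, ← mul_add]
  congr 1
  rw [AddMonoidAlgebra.coeff_add]
  exact Finsupp.sum_add_index' (fun j => by simp) (fun j c₁ c₂ => add_mul _ _ _)

lemma v_sub (n : ℕ) (f g : LaurentPolynomial ℚ) : v n (f - g) = v n f - v n g := by
  simp only [v_eq_sum, ← mul_sub]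
  congr 1
  rw [AddMonoidAlgebra.coeff_sub]
  exact Finsupp.sum_sub_index (fun j c₁ c₂ => sub_mul _ _ _)

lemma T_mul_eq_mapDomain (a : ℤ) (f : LaurentPolynomial ℚ) :
    (T a * f).coeff = Finsupp.mapDomain (a + ·) f.coeff := by
  ext j
  rw [T, AddMonoidAlgebra.coeff_single_mul_apply]
  rw [show ((a + ·) : ℤ → ℤ) = ⇑(Equiv.addLeft a) from rfl,
    Finsupp.mapDomain_equiv_apply]
  simp [Equiv.addLeft]

lemma v_T_mul (a : ℤ) (n : ℕ) (f : LaurentPolynomial ℚ) :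
    v n (T a * f) =
      ∑ k ∈ Finset.range (n + 1),
        ((a : ℚ) ^ (n - k) / ((n - k).factorial : ℚ)) * v k f := by
  rw [v_eq_sum, T_mul_eq_mapDomain,
    Finsupp.sum_mapDomain_index (h := fun (j : ℤ) (c : ℚ) => c * (j : ℚ) ^ n) (by simp)
      (fun j c₁ c₂ => add_mul _ _ _)]
  have key : ∀ j : ℤ, (1 / (n.factorial : ℚ)) * ((a + j : ℤ) : ℚ) ^ n =
      ∑ k ∈ Finset.range (n + 1),
        ((a : ℚ) ^ (n - k) / ((n - k).factorial : ℚ)) * ((1 / (k.factorial : ℚ)) * (j : ℚ) ^ k) := by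
    intro j
    push_cast
    rw [add_comm (a : ℚ) (j : ℚ), add_pow]
    rw [Finset.mul_sum]
    refine Finset.sum_congr rfl fun k hk => ?_
    have hkn : k ≤ n := Nat.lt_succ_iff.mp (Finset.mem_range.mp hk)
    rw [Nat.cast_choose ℚ hkn]
    have h1 : (n.factorial : ℚ) ≠ 0 := Nat.cast_ne_zero.mpr (Nat.factorial_ne_zero n)
    have h2 : (k.factorial : ℚ) ≠ 0 := Nat.cast_ne_zero.mpr (Nat.factorial_ne_zero k)
    have h3 : ((n - k).factorial : ℚ) ≠ 0 := Nat.cast_ne_zero.mpr (Nat.factorial_ne_zero (n - k))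
    field_simp
  calc (1 / (n.factorial : ℚ)) * f.coeff.sum (fun j c => c * ((a + j : ℤ) : ℚ) ^ n)
      = f.coeff.sum (fun j c => c * ((1 / (n.factorial : ℚ)) * ((a + j : ℤ) : ℚ) ^ n)) := by
        rw [Finsupp.mul_sum]; exact Finsupp.sum_congr fun j _ => by ring
    _ = f.coeff.sum (fun j c => ∑ k ∈ Finset.range (n + 1),
          ((a : ℚ) ^ (n - k) / ((n - k).factorial : ℚ)) *
            (c * ((1 / (k.factorial : ℚ)) * (j : ℚ) ^ k))) := by
        refine Finsupp.sum_congr fun j _ => ?_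
        rw [key j, Finset.mul_sum]
        exact Finset.sum_congr rfl fun k _ => by ring
    _ = ∑ k ∈ Finset.range (n + 1),
          ((a : ℚ) ^ (n - k) / ((n - k).factorial : ℚ)) * v k f := by
        rw [Finsupp.sum, Finset.sum_comm]
        refine Finset.sum_congr rfl fun k _ => ?_
        rw [v_eq_sum, Finsupp.sum, Finset.mul_sum, Finset.mul_sum]
        exact Finset.sum_congr rfl fun j _ => by ring

/-- Theorem 13 (recursion form): for `f⋆ = (A² - A⁻²) f₀ + (A⁴ - A⁻⁴) fI`,
`v_n(f⋆) = ∑_{k=0}^{n-1} c_{n,k} (v_k(f₀) + 2^{n-k} v_k(fI))`. -/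
theorem stmt3 (f₀ fI : LaurentPolynomial ℚ) (n : ℕ) :
    v n ((T 2 - T (-2)) * f₀ + (T 4 - T (-4)) * fI) =
      ∑ k ∈ Finset.range n, cCoeff n k * (v k f₀ + 2 ^ (n - k) * v k fI) := by
  have e : (T 2 - T (-2)) * f₀ + (T 4 - T (-4)) * fI =
      (T 2 * f₀ - T (-2) * f₀) + (T 4 * fI - T (-4) * fI) := by ring
  rw [e, v_add, v_sub, v_sub, v_T_mul, v_T_mul, v_T_mul, v_T_mul]
  rw [← Finset.sum_sub_distrib, ← Finset.sum_sub_distrib, ← Finset.sum_add_distrib]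
  have step : ∀ k ∈ Finset.range (n + 1),
      (((2 : ℤ) : ℚ) ^ (n - k) / ((n - k).factorial : ℚ)) * v k f₀ -
        (((-2 : ℤ) : ℚ) ^ (n - k) / ((n - k).factorial : ℚ)) * v k f₀ +
        ((((4 : ℤ) : ℚ) ^ (n - k) / ((n - k).factorial : ℚ)) * v k fI -
          (((-4 : ℤ) : ℚ) ^ (n - k) / ((n - k).factorial : ℚ)) * v k fI) =
      cCoeff n k * (v k f₀ + 2 ^ (n - k) * v k fI) := by
    intro k _
    have h2 : ((2 : ℚ)) ^ (n - k) - ((-2 : ℚ)) ^ (n - k) =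
        2 ^ (n - k) * (1 + (-1 : ℚ) ^ (n - k + 1)) := by
      rw [neg_pow, pow_succ]; ring
    have h4 : ((4 : ℚ)) ^ (n - k) - ((-4 : ℚ)) ^ (n - k) =
        2 ^ (n - k) * (1 + (-1 : ℚ) ^ (n - k + 1)) * 2 ^ (n - k) := by
      rw [neg_pow, pow_succ, show (4 : ℚ) = 2 * 2 by norm_num, mul_pow]; ring
    have lhs_eq :
        (((2 : ℤ) : ℚ) ^ (n - k) / ((n - k).factorial : ℚ)) * v k f₀ -
          (((-2 : ℤ) : ℚ) ^ (n - k) / ((n - k).factorial : ℚ)) * v k f₀ +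
          ((((4 : ℤ) : ℚ) ^ (n - k) / ((n - k).factorial : ℚ)) * v k fI -
            (((-4 : ℤ) : ℚ) ^ (n - k) / ((n - k).factorial : ℚ)) * v k fI) =
        (((2 : ℚ) ^ (n - k) - (-2 : ℚ) ^ (n - k)) / ((n - k).factorial : ℚ)) * v k f₀ +
          (((4 : ℚ) ^ (n - k) - (-4 : ℚ) ^ (n - k)) / ((n - k).factorial : ℚ)) * v k fI := by
      push_cast; ring
    rw [lhs_eq, h2, h4, cCoeff]
    ring
  rw [Finset.sum_congr rfl step, Finset.sum_range_succ]
  have : cCoeff n n = 0 := by simp [cCoeff]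
  rw [this]
  ring
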